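/- If φ(t) = λ₁(t)Z(θ(t)) + λ₂ vanishes identically on a nondegenerate interval S, ω > 0, and λ₁(t) ≠ 0 on S, then Z'(θ(t)) = 0 for all t in S. -/

import Mathlib

theorem singular_arc_forces_Z_deriv_zero
    (Z : ℝ → ℝ) (hZ : ContDiff ℝ 1 Z)
    (ω lam2 : ℝ) (hω : 0 < ω)
    (u θ lam1 : ℝ → ℝ)
    (hθ : ∀ t, HasDerivAt θ (ω + Z (θ t) * u t) t)
    (hlam1 : ∀ t, HasDerivAt lam1 (-(lam1 t) * u t * deriv Z (θ t)) t)
    (τ1 τ2 : ℝ) (hτ : τ1 < τ2)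
    (hlamne : ∀ t ∈ Set.Icc τ1 τ2, lam1 t ≠ 0)
    (hφ : ∀ t ∈ Set.Icc τ1 τ2, lam1 t * Z (θ t) + lam2 = 0) :
    ∀ t ∈ Set.Icc τ1 τ2, deriv Z (θ t) = 0 := by
  intro t ht
  set φ : ℝ → ℝ := fun s => lam1 s * Z (θ s) + lam2 with hφdef
  have hZd : ∀ s : ℝ, HasDerivAt Z (deriv Z s) s := fun s =>
    ((hZ.differentiable one_ne_zero) s).hasDerivAt
  have hφ' : HasDerivAt φ (lam1 t * deriv Z (θ t) * ω) t := by
    have hcomp : HasDerivAt (fun s => Z (θ s))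
        (deriv Z (θ t) * (ω + Z (θ t) * u t)) t := (hZd (θ t)).comp t (hθ t)
    have : HasDerivAt φ (-(lam1 t) * u t * deriv Z (θ t) * Z (θ t) + lam1 t * (deriv Z (θ t) * (ω + Z (θ t) * u t))) t :=
      ((hlam1 t).mul hcomp).add_const lam2
    convert this using 1
    ring
  have hunique : lam1 t * deriv Z (θ t) * ω = 0 := by
    have h1 : HasDerivWithinAt φ (lam1 t * deriv Z (θ t) * ω) (Set.Icc τ1 τ2) t :=
      hφ'.hasDerivWithinAt
    have h2 : HasDerivWithinAt φ 0 (Set.Icc τ1 τ2) t := by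
      have hc : HasDerivWithinAt (fun _ : ℝ => (0 : ℝ)) 0 (Set.Icc τ1 τ2) t :=
        (hasDerivAt_const t (0 : ℝ)).hasDerivWithinAt
      exact hc.congr (fun y hy => hφ y hy) (hφ t ht)
    have hud : UniqueDiffWithinAt ℝ (Set.Icc τ1 τ2) t :=
      (uniqueDiffOn_Icc hτ) t ht
    rw [← h1.derivWithin hud, h2.derivWithin hud]
  have hlam := hlamne t ht
  rcases mul_eq_zero.mp hunique with h | h
  · rcases mul_eq_zero.mp h with h' | h'
    · exact absurd h' hlam
    · exact h'
  · exact absurd h hω.ne'
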